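/- Assume the abc-type bound: there is κ > 0 such that for all coprime positive integers a, b, c with a + b = c and all τ > 0 with a ≤ c / exp((log c)^τ · log₂*(c)), one has log c ≤ exp(τ⁻¹ κ · (log₃* rad(bc) / log₂* rad(bc)) · log rad(bc)). Then for pairwise coprime nonzero integers x₁, x₂, x₃, x₄ with x₁ + x₂ + x₃ + x₄ = 0, H = max_j |x_j|, R = rad(x₁x₂x₃x₄), and τ > 0 such that min_{i<j} |x_i + x_j| ≤ H / exp((log H)^τ · log₂*(H)), one has log H ≤ exp(τ⁻¹ κ · (log₃* R / log₂* R) · log R). -/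
import Mathlib


/-- The radical of a nonzero integer: product of the distinct prime divisors
of its absolute value. -/
def rad (n : ℤ) : ℕ := ∏ p ∈ n.natAbs.primeFactors, p

/-- `log₂*(t) = max(1, log log t)`. -/
noncomputable def log2star (t : ℝ) : ℝ := max 1 (Real.log (Real.log t))

/-- `log₃*(t) = max(1, log log log t)`. -/
noncomputable def log3star (t : ℝ) : ℝ := max 1 (Real.log (Real.log (Real.log t)))

lemma aux_div_log_mono {a b : ℝ} (ha : Real.exp 1 ≤ a) (hab : a ≤ b) :
    a / Real.log a ≤ b / Real.log b := by
  have h0a : (0:ℝ) < a := lt_of_lt_of_le (Real.exp_pos 1) ha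
  have h0b : (0:ℝ) < b := h0a.trans_le hab
  have h1a : 1 ≤ Real.log a := by
    have := Real.log_le_log (Real.exp_pos 1) ha
    rwa [Real.log_exp] at this
  have h1b : 1 ≤ Real.log b := h1a.trans (Real.log_le_log h0a hab)
  rw [div_le_div_iff₀ (by linarith) (by linarith)]
  have hlog : Real.log b = Real.log a + Real.log (b / a) := by
    rw [Real.log_div h0b.ne' h0a.ne']; ring
  have hle : Real.log (b / a) ≤ b / a - 1 := Real.log_le_sub_one_of_pos (by positivity)
  have key : a * Real.log (b / a) ≤ b - a := by
    have := mul_le_mul_of_nonneg_left hle h0a.le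
    calc a * Real.log (b / a) ≤ a * (b / a - 1) := this
      _ = b - a := by field_simp
  nlinarith [key, hlog]

lemma max_one_log_mono {a b : ℝ} (ha : 0 ≤ a) (hab : a ≤ b) :
    max 1 (Real.log a) ≤ max 1 (Real.log b) := by
  rcases le_or_gt (Real.log a) 1 with h | h
  · rw [max_eq_left h]; exact le_max_left _ _
  · have ha1 : 1 < a := by
      by_contra hc; push_neg at hc
      have : Real.log a ≤ 0 := Real.log_nonpos ha hc
      linarith
    exact max_le_max le_rfl (Real.log_le_log (by linarith) hab)

lemma log2star_mono {s t : ℝ} (hs : 1 ≤ s) (hst : s ≤ t) : log2star s ≤ log2star t :=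
  max_one_log_mono (Real.log_nonneg hs) (Real.log_le_log (by linarith) hst)

lemma one_le_log2star (t : ℝ) : 1 ≤ log2star t := le_max_left _ _
lemma one_le_log3star (t : ℝ) : 1 ≤ log3star t := le_max_left _ _

lemma log3star_mono {s t : ℝ} (hs : 2 ≤ s) (hst : s ≤ t) : log3star s ≤ log3star t := by
  unfold log3star
  rcases le_or_gt (Real.log (Real.log (Real.log s))) 1 with h | h
  · rw [max_eq_left h]; exact le_max_left _ _
  · have hls : 0 < Real.log s := Real.log_pos (by linarith)
    -- log s ≥ log 2 > exp(-1), so log log s ≥ -1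
    have hm1 : (-1 : ℝ) ≤ Real.log (Real.log s) := by
      have h1 : Real.exp (-1) ≤ Real.log s := by
        have he2 : (2:ℝ) ≤ Real.exp 1 := by nlinarith [Real.exp_one_gt_d9]
        have hh : Real.exp (-1) ≤ 1/2 := by
          rw [Real.exp_neg]
          rw [inv_le_comm₀ (Real.exp_pos 1) (by norm_num)]
          linarith
        have : Real.exp (-1) ≤ Real.log 2 := by
          nlinarith [Real.log_two_gt_d9]
        exact this.trans (Real.log_le_log (by norm_num) hs)
      have := Real.log_le_log (Real.exp_pos _) h1
      rwa [Real.log_exp] at this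
    have h2 : 1 < Real.log (Real.log s) := by
      by_contra hc; push_neg at hc
      rcases le_or_gt (Real.log (Real.log s)) 0 with h0 | h0
      · -- log(loglog s) = log(-loglog s) ≤ 0 since -loglog s ∈ [0,1]
        have : Real.log (Real.log (Real.log s)) =
            Real.log (-(Real.log (Real.log s))) := (Real.log_neg_eq_log _).symm
        rw [this] at h
        have : Real.log (-(Real.log (Real.log s))) ≤ 0 :=
          Real.log_nonpos (by linarith) (by linarith)
        linarith
      · have : Real.log (Real.log (Real.log s)) ≤ 0 := Real.log_nonpos h0.le hc
        linarith
    have h3 : 1 < Real.log s := by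
      by_contra hc; push_neg at hc
      have : Real.log (Real.log s) ≤ 0 := Real.log_nonpos hls.le hc
      linarith
    have c1 : Real.log s ≤ Real.log t := Real.log_le_log (by linarith) hst
    have c2 : Real.log (Real.log s) ≤ Real.log (Real.log t) := Real.log_le_log hls c1
    have c3 : Real.log (Real.log (Real.log s)) ≤ Real.log (Real.log (Real.log t)) :=
      Real.log_le_log (by linarith) c2
    exact max_le_max le_rfl c3

lemma F1_mono {s t : ℝ} (hs : 1 ≤ s) (hst : s ≤ t) :
    Real.log s / log2star s ≤ Real.log t / log2star t := by
  have hls : 0 ≤ Real.log s := Real.log_nonneg hs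
  have hlst : Real.log s ≤ Real.log t := Real.log_le_log (by linarith) hst
  unfold log2star
  rcases le_or_gt (Real.log (Real.log t)) 1 with h | h
  · have h2 : Real.log (Real.log s) ≤ 1 := by
      rcases eq_or_lt_of_le hls with h0 | h0
      · rw [← h0, Real.log_zero]; norm_num
      · exact (Real.log_le_log h0 hlst).trans h
    rw [max_eq_left h, max_eq_left h2, div_one, div_one]; exact hlst
  · have hlt0 : 0 < Real.log t := by
      by_contra hc; push_neg at hc
      rcases eq_or_lt_of_le (hls.trans hlst) with h0 | h0
      · rw [← h0, Real.log_zero] at h; linarith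
      · linarith
    have he : Real.exp 1 < Real.log t := by
      rwa [← Real.lt_log_iff_exp_lt hlt0]
    rw [max_eq_right h.le]
    rcases le_or_gt (Real.log (Real.log s)) 1 with h2 | h2
    · rw [max_eq_left h2, div_one]
      have h3 : Real.log s ≤ Real.exp 1 := by
        by_contra hc; push_neg at hc
        have h4 : 0 < Real.log s := (Real.exp_pos 1).trans hc
        have : 1 < Real.log (Real.log s) := by
          rw [Real.lt_log_iff_exp_lt h4]; exact hc
        linarith
      have h4 : Real.exp 1 / Real.log (Real.exp 1) ≤ Real.log t / Real.log (Real.log t) :=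
        aux_div_log_mono le_rfl he.le
      rw [Real.log_exp, div_one] at h4
      linarith
    · rw [max_eq_right h2.le]
      have h4 : 0 < Real.log s := by
        rcases eq_or_lt_of_le hls with h0 | h0
        · rw [← h0, Real.log_zero] at h2; linarith
        · exact h0
      have hse : Real.exp 1 < Real.log s := by
        rwa [← Real.lt_log_iff_exp_lt h4]
      exact aux_div_log_mono hse.le hlst

lemma g_mono {s t : ℝ} (hs : 2 ≤ s) (hst : s ≤ t) :
    log3star s / log2star s * Real.log s ≤ log3star t / log2star t * Real.log t := by
  have e1 : ∀ u : ℝ, log3star u / log2star u * Real.log u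
      = Real.log u / log2star u * log3star u := fun u => by ring
  rw [e1, e1]
  have h2t : 0 < log2star t := lt_of_lt_of_le one_pos (one_le_log2star t)
  apply mul_le_mul (F1_mono (by linarith) hst) (log3star_mono hs hst)
    (le_trans zero_le_one (one_le_log3star s))
    (div_nonneg (Real.log_nonneg (by linarith)) h2t.le)

lemma key (κ : ℝ) (hκ : 0 < κ)
    (habc : ∀ a b c : ℕ, 0 < a → 0 < b → Nat.Coprime a b → a + b = c →
      ∀ τ : ℝ, 0 < τ →
      (a : ℝ) ≤ (c : ℝ) / Real.exp ((Real.log c) ^ τ * log2star c) →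
      Real.log c ≤
        Real.exp (τ⁻¹ * κ *
          (log3star (rad (b * c : ℤ)) / log2star (rad (b * c : ℤ))) *
          Real.log (rad (b * c : ℤ))))
    (τ : ℝ) (hτ : 0 < τ) (H : ℝ) (hH1 : 1 < H) (R : ℕ)
    (u v w P : ℤ) (hP : P ≠ 0) (hv : v ≠ 0)
    (hsum : u + v + w = 0) (hcop : IsCoprime u v)
    (hdvd : u * v ∣ P) (hR : R = rad P)
    (hHu : ((u.natAbs : ℕ) : ℝ) = H)
    (hvu : v.natAbs ≤ u.natAbs)
    (hw : ((w.natAbs : ℕ) : ℝ) ≤ H / Real.exp ((Real.log H) ^ τ * log2star H)) :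
    Real.log H ≤ Real.exp (τ⁻¹ * κ * (log3star R / log2star R) * Real.log R) := by
  have hHpos : 0 < H := lt_trans one_pos hH1
  have hlogH : 0 < Real.log H := Real.log_pos hH1
  have hE : 0 < Real.log H ^ τ * log2star H := by
    have h1 : 0 < Real.log H ^ τ := Real.rpow_pos_of_pos hlogH τ
    have h2 : (1:ℝ) ≤ log2star H := one_le_log2star H
    nlinarith
  have hexp : 1 < Real.exp (Real.log H ^ τ * log2star H) := by
    rw [← Real.exp_zero]; exact Real.exp_lt_exp.mpr hE
  have hwH : ((w.natAbs : ℕ) : ℝ) < H := lt_of_le_of_lt hw (div_lt_self hHpos hexp)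
  have hwu : w.natAbs < u.natAbs := by
    rw [← hHu] at hwH; exact_mod_cast hwH
  have hw0 : w ≠ 0 := by
    intro h0
    have hv' : v = -u := by omega
    have hg : Int.gcd u v = 1 := Int.isCoprime_iff_gcd_eq_one.mp hcop
    rw [hv'] at hg
    simp [Int.gcd] at hg
    rw [hg] at hHu
    norm_num at hHu
    linarith
  have hguv : Nat.gcd u.natAbs v.natAbs = 1 := Int.isCoprime_iff_gcd_eq_one.mp hcop
  have habsum : w.natAbs + v.natAbs = u.natAbs := by omega
  have hcop' : Nat.Coprime w.natAbs v.natAbs := by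
    have d1 : Nat.gcd w.natAbs v.natAbs ∣ u.natAbs := by
      rw [← habsum]; exact Nat.dvd_add (Nat.gcd_dvd_left _ _) (Nat.gcd_dvd_right _ _)
    have d2 : Nat.gcd w.natAbs v.natAbs ∣ Nat.gcd u.natAbs v.natAbs :=
      Nat.dvd_gcd d1 (Nat.gcd_dvd_right _ _)
    rw [hguv] at d2
    exact Nat.dvd_one.mp d2
  have hbound : ((w.natAbs : ℕ) : ℝ) ≤ ((u.natAbs : ℕ) : ℝ) /
      Real.exp (Real.log ((u.natAbs : ℕ) : ℝ) ^ τ * log2star ((u.natAbs : ℕ) : ℝ)) := by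
    rw [hHu]; exact hw
  have habc' := habc w.natAbs v.natAbs u.natAbs
    (Int.natAbs_pos.mpr hw0) (Int.natAbs_pos.mpr hv) hcop' habsum τ hτ hbound
  have hradeq : rad ((v.natAbs : ℤ) * (u.natAbs : ℤ)) = rad (v * u) := by
    unfold rad
    rw [show ((v.natAbs : ℤ) * (u.natAbs : ℤ)).natAbs = (v * u).natAbs by
      rw [Int.natAbs_mul, Int.natAbs_mul, Int.natAbs_natCast, Int.natAbs_natCast]]
  rw [hHu, show ((v.natAbs : ℕ) * (u.natAbs : ℕ) : ℤ) = ((v.natAbs : ℤ) * (u.natAbs : ℤ)) by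
      push_cast; ring] at habc'
  rw [hradeq] at habc'
  set r := rad (v * u) with hr
  have hRpos : 0 < R := by
    rw [hR]; unfold rad
    exact Finset.prod_pos fun p hp => (Nat.prime_of_mem_primeFactors hp).pos
  have hrpos : 0 < r := by
    rw [hr]; unfold rad
    exact Finset.prod_pos fun p hp => (Nat.prime_of_mem_primeFactors hp).pos
  have hrdvd : r ∣ R := by
    rw [hR, hr]; unfold rad
    apply Finset.prod_dvd_prod_of_subset
    apply Nat.primeFactors_mono
    · exact Int.natAbs_dvd_natAbs.mpr (by rwa [mul_comm] at hdvd)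
    · exact Int.natAbs_ne_zero.mpr hP
  have hrR : r ≤ R := Nat.le_of_dvd hRpos hrdvd
  refine habc'.trans (Real.exp_le_exp.mpr ?_)
  have hτκ : (0:ℝ) ≤ τ⁻¹ * κ := by positivity
  have hBnn : 0 ≤ log3star (R:ℝ) / log2star (R:ℝ) * Real.log (R:ℝ) := by
    have h2 : 0 < log2star (R:ℝ) := lt_of_lt_of_le one_pos (one_le_log2star _)
    have h3 : 0 ≤ log3star (R:ℝ) := le_trans zero_le_one (one_le_log3star _)
    have h4 : 0 ≤ Real.log (R:ℝ) := Real.log_nonneg (by exact_mod_cast hRpos)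
    positivity
  rcases Nat.lt_or_ge r 2 with hr2 | hr2
  · have hr1 : r = 1 := by omega
    rw [hr1]
    norm_num
    rw [mul_assoc]
    exact mul_nonneg hτκ hBnn
  · have hg := g_mono (s := (r:ℝ)) (t := (R:ℝ)) (by exact_mod_cast hr2) (by exact_mod_cast hrR)
    calc τ⁻¹ * κ * (log3star (r:ℝ) / log2star (r:ℝ)) * Real.log (r:ℝ)
        = τ⁻¹ * κ * (log3star (r:ℝ) / log2star (r:ℝ) * Real.log (r:ℝ)) := by ring
      _ ≤ τ⁻¹ * κ * (log3star (R:ℝ) / log2star (R:ℝ) * Real.log (R:ℝ)) :=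
          mul_le_mul_of_nonneg_left hg hτκ
      _ = τ⁻¹ * κ * (log3star (R:ℝ) / log2star (R:ℝ)) * Real.log (R:ℝ) := by ring

theorem stmt_10 (κ : ℝ) (hκ : 0 < κ)
    (habc : ∀ a b c : ℕ, 0 < a → 0 < b → Nat.Coprime a b → a + b = c →
      ∀ τ : ℝ, 0 < τ →
      (a : ℝ) ≤ (c : ℝ) / Real.exp ((Real.log c) ^ τ * log2star c) →
      Real.log c ≤
        Real.exp (τ⁻¹ * κ *
          (log3star (rad (b * c : ℤ)) / log2star (rad (b * c : ℤ))) *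
          Real.log (rad (b * c : ℤ))))
    (x : Fin 4 → ℤ) (hx : ∀ j, x j ≠ 0)
    (hcop : ∀ i j, i ≠ j → IsCoprime (x i) (x j))
    (hsum : x 0 + x 1 + x 2 + x 3 = 0)
    (H : ℝ) (hH : H = ((Finset.univ.sup fun j => (x j).natAbs : ℕ) : ℝ))
    (R : ℕ) (hR : R = rad (x 0 * x 1 * x 2 * x 3))
    (τ : ℝ) (hτ : 0 < τ)
    (hmin : ∃ i j : Fin 4, i < j ∧
      (|x i + x j| : ℝ) ≤ H / Real.exp ((Real.log H) ^ τ * log2star H) ∧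
      ∀ k l : Fin 4, k < l → |x i + x j| ≤ |x k + x l|) :
    Real.log H ≤
      Real.exp (τ⁻¹ * κ * (log3star R / log2star R) * Real.log R) := by
  obtain ⟨i, j, hij, hsmall, -⟩ := hmin
  have hP : x 0 * x 1 * x 2 * x 3 ≠ 0 :=
    mul_ne_zero (mul_ne_zero (mul_ne_zero (hx 0) (hx 1)) (hx 2)) (hx 3)
  have hH1 : 1 ≤ H := by
    rw [hH]
    have h1 : 1 ≤ (x 0).natAbs := Int.natAbs_pos.mpr (hx 0)
    have h2 : (x 0).natAbs ≤ Finset.univ.sup fun j => (x j).natAbs :=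
      Finset.le_sup (f := fun j => (x j).natAbs) (Finset.mem_univ 0)
    exact_mod_cast h1.trans h2
  rcases eq_or_lt_of_le hH1 with hH1' | hH1'
  · rw [← hH1', Real.log_one]; exact (Real.exp_pos _).le
  · obtain ⟨m, -, hm⟩ := Finset.exists_mem_eq_sup Finset.univ ⟨0, Finset.mem_univ 0⟩
      (fun j => (x j).natAbs)
    have hsmall' : (((x i + x j).natAbs : ℕ) : ℝ) ≤
        H / Real.exp ((Real.log H) ^ τ * log2star H) := by
      rw [Nat.cast_natAbs]
      push_cast
      exact hsmall
    have KEY : ∀ p q a b : Fin 4, p ≠ q →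
        x p * x q * (x a * x b) = x 0 * x 1 * x 2 * x 3 →
        x p + x q + (x a + x b) = 0 →
        (x a + x b).natAbs = (x i + x j).natAbs →
        Finset.univ.sup (fun j => (x j).natAbs) = (x p).natAbs →
        Real.log H ≤ Real.exp (τ⁻¹ * κ * (log3star R / log2star R) * Real.log R) := by
      intro p q a b hpq hprod hsum4 habs hsup
      refine key κ hκ habc τ hτ H hH1' R (x p) (x q) (x a + x b) (x 0 * x 1 * x 2 * x 3)
        hP (hx q) hsum4 (hcop p q hpq) ⟨x a * x b, hprod.symm⟩ hR ?_ ?_ ?_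
      · rw [hH, hsup]
      · rw [← hsup]; exact Finset.le_sup (f := fun j => (x j).natAbs) (Finset.mem_univ q)
      · rw [habs]; exact hsmall'
    have hfin : ∀ z : Fin 4, z = 0 ∨ z = 1 ∨ z = 2 ∨ z = 3 := by decide
    rcases hfin i with rfl | rfl | rfl | rfl <;> rcases hfin j with rfl | rfl | rfl | rfl <;>
      first
      | exact absurd hij (by decide)
      | (rcases hfin m with rfl | rfl | rfl | rfl <;>
          first
          | exact KEY 0 1 2 3 (by decide) (by ring) (by omega) (by omega) hm
          | exact KEY 1 0 2 3 (by decide) (by ring) (by omega) (by omega) hm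
          | exact KEY 2 3 0 1 (by decide) (by ring) (by omega) (by omega) hm
          | exact KEY 3 2 0 1 (by decide) (by ring) (by omega) (by omega) hm
          | exact KEY 0 2 1 3 (by decide) (by ring) (by omega) (by omega) hm
          | exact KEY 2 0 1 3 (by decide) (by ring) (by omega) (by omega) hm
          | exact KEY 1 3 0 2 (by decide) (by ring) (by omega) (by omega) hm
          | exact KEY 3 1 0 2 (by decide) (by ring) (by omega) (by omega) hm
          | exact KEY 0 3 1 2 (by decide) (by ring) (by omega) (by omega) hm
          | exact KEY 3 0 1 2 (by decide) (by ring) (by omega) (by omega) hm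
          | exact KEY 1 2 0 3 (by decide) (by ring) (by omega) (by omega) hm
          | exact KEY 2 1 0 3 (by decide) (by ring) (by omega) (by omega) hm)
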